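/- Let ξ₁, ..., ξ_x be i.i.d. geometric random variables with parameter 1/2 (taking values in {0,1,2,...} with P[ξᵢ = k] = 2^{-(k+1)}), so that E[ξᵢ] = 1. Then for all positive integers x and y, P[|∑_{i=1}^x (ξᵢ - 1)| ≥ y] ≤ 2·exp(-y²/(6·max(x,y))). -/

import Mathlib

open MeasureTheory ProbabilityTheory

private lemma exp_quartic {t : ℝ} (ht : |t| ≤ 1) :
    Real.exp t ≤ 1 + t + t^2/2 + t^3/6 + 5/96 * t^4 := by
  have h := Real.exp_bound ht (n := 4) (by norm_num)
  have h2 := (abs_sub_le_iff.1 h).1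
  have hs : (∑ m ∈ Finset.range 4, t ^ m / m.factorial) = 1 + t + t^2/2 + t^3/6 := by
    simp [Finset.sum_range_succ, Nat.factorial]
  have habs : |t|^4 = t^4 := by
    rw [← abs_pow, abs_of_nonneg (by positivity)]
  rw [hs, habs] at h2
  have : (Nat.factorial 4 : ℝ) = 24 := by norm_num [Nat.factorial]
  rw [this] at h2
  norm_num at h2
  linarith

private lemma key1 {t : ℝ} (h0 : 0 ≤ t) (h3 : t ≤ 3/10) :
    Real.exp (-(t + 40/27 * t^2)) ≤ 2 - Real.exp t := by
  have h1 := exp_quartic (t := t) (by rw [abs_le]; constructor <;> nlinarith)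
  have h2 := exp_quartic (t := -(t + 40/27 * t^2)) (by rw [abs_le]; constructor <;> nlinarith)
  nlinarith [h1, h2, sq_nonneg t, mul_nonneg h0 h0, sq_nonneg (t - 3/10),
    mul_nonneg (mul_nonneg h0 h0) h0, pow_nonneg h0 4, pow_nonneg h0 5, pow_nonneg h0 6,
    mul_nonneg (pow_nonneg h0 2) (sub_nonneg.2 h3),
    mul_nonneg (pow_nonneg h0 3) (sub_nonneg.2 h3),
    mul_nonneg (pow_nonneg h0 4) (sub_nonneg.2 h3),
    mul_nonneg (pow_nonneg h0 5) (sub_nonneg.2 h3),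
    mul_nonneg (pow_nonneg h0 6) (sub_nonneg.2 h3),
    mul_nonneg (pow_nonneg h0 7) (sub_nonneg.2 h3)]

private lemma key2 {t : ℝ} (h0 : 0 ≤ t) (h3 : t ≤ 3/10) :
    Real.exp (t - 40/27 * t^2) ≤ 2 - Real.exp (-t) := by
  have h1 := exp_quartic (t := -t) (by rw [abs_le]; constructor <;> nlinarith)
  have h2 := exp_quartic (t := t - 40/27 * t^2) (by rw [abs_le]; constructor <;> nlinarith)
  nlinarith [h1, h2, sq_nonneg t, pow_nonneg h0 4, pow_nonneg h0 5, pow_nonneg h0 6,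
    mul_nonneg (pow_nonneg h0 2) (sub_nonneg.2 h3),
    mul_nonneg (pow_nonneg h0 3) (sub_nonneg.2 h3),
    mul_nonneg (pow_nonneg h0 4) (sub_nonneg.2 h3),
    mul_nonneg (pow_nonneg h0 5) (sub_nonneg.2 h3),
    mul_nonneg (pow_nonneg h0 6) (sub_nonneg.2 h3),
    mul_nonneg (pow_nonneg h0 7) (sub_nonneg.2 h3)]

section
variable {Ω : Type*} [MeasurableSpace Ω] (P : Measure Ω) (ξ : Ω → ℕ) (hm : Measurable ξ)
  (hg : ∀ k, P {ω | ξ ω = k} = (2 : ENNReal)⁻¹ ^ (k + 1)) {t : ℝ} (ht : Real.exp t < 2)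

include hm hg ht in
private lemma lint_geom :
    ∫⁻ ω, ENNReal.ofReal (Real.exp (t * (ξ ω : ℝ))) ∂P
      = ENNReal.ofReal ((2 - Real.exp t)⁻¹) := by
  have het : (0:ℝ) < Real.exp t := Real.exp_pos t
  have h2 : (0:ℝ) < 1 - Real.exp t * 2⁻¹ := by nlinarith
  rw [← lintegral_map (g := ξ) (f := fun k : ℕ => ENNReal.ofReal (Real.exp (t * (k : ℝ))))
      measurable_from_nat hm, lintegral_countable']
  have hmap : ∀ k : ℕ, (P.map ξ) {k} = (2:ENNReal)⁻¹ ^ (k+1) := fun k => by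
    rw [Measure.map_apply hm (measurableSet_singleton k)]
    exact hg k
  calc ∑' k : ℕ, ENNReal.ofReal (Real.exp (t * (k : ℝ))) * (P.map ξ) {k}
      = ∑' k : ℕ, (ENNReal.ofReal (Real.exp t * 2⁻¹)) ^ k * 2⁻¹ := by
        refine tsum_congr fun k => ?_
        rw [hmap k, mul_comm t (k:ℝ), Real.exp_nat_mul, pow_succ,
          ENNReal.ofReal_pow het.le, ENNReal.ofReal_mul het.le,
          show ENNReal.ofReal 2⁻¹ = (2:ENNReal)⁻¹ by
            rw [ENNReal.ofReal_inv_of_pos two_pos, ENNReal.ofReal_ofNat],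
          mul_pow]
        ring
    _ = (1 - ENNReal.ofReal (Real.exp t * 2⁻¹))⁻¹ * 2⁻¹ := by
        rw [ENNReal.tsum_mul_right, ENNReal.tsum_geometric]
    _ = ENNReal.ofReal ((2 - Real.exp t)⁻¹) := by
        rw [show (1:ENNReal) - ENNReal.ofReal (Real.exp t * 2⁻¹)
              = ENNReal.ofReal (1 - Real.exp t * 2⁻¹) by
            rw [ENNReal.ofReal_sub _ (by positivity), ENNReal.ofReal_one],
          ← ENNReal.ofReal_inv_of_pos h2,
          show (2:ENNReal)⁻¹ = ENNReal.ofReal 2⁻¹ by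
            rw [ENNReal.ofReal_inv_of_pos two_pos, ENNReal.ofReal_ofNat],
          ← ENNReal.ofReal_mul (by positivity)]
        congr 1
        rw [← mul_inv]
        congr 1
        ring

include hm hg ht in
private lemma int_geom : Integrable (fun ω => Real.exp (t * (ξ ω : ℝ))) P := by
  have hmble : Measurable fun ω => Real.exp (t * (ξ ω : ℝ)) :=
    (((measurable_from_nat (f := fun k : ℕ => ((k:ℝ)))).comp hm).const_mul t).exp
  refine ⟨hmble.aestronglyMeasurable, ?_⟩
  rw [hasFiniteIntegral_iff_ofReal (ae_of_all _ fun ω => (Real.exp_pos _).le)]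
  rw [lint_geom P ξ hm hg ht]
  exact ENNReal.ofReal_lt_top

include hm hg ht in
private lemma mgf_geom : mgf (fun ω => (ξ ω : ℝ)) P t = (2 - Real.exp t)⁻¹ := by
  have hmble : Measurable fun ω => Real.exp (t * (ξ ω : ℝ)) :=
    (((measurable_from_nat (f := fun k : ℕ => ((k:ℝ)))).comp hm).const_mul t).exp
  rw [mgf, integral_eq_lintegral_of_nonneg_ae (ae_of_all _ fun ω => (Real.exp_pos _).le)
    hmble.aestronglyMeasurable, lint_geom P ξ hm hg ht,
    ENNReal.toReal_ofReal (le_of_lt (inv_pos.2 (by linarith)))]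

end

theorem geometric_sum_concentration
    {Ω : Type*} [MeasurableSpace Ω] (P : Measure Ω) [IsProbabilityMeasure P]
    (ξ : ℕ → Ω → ℕ) (hmeas : ∀ i, Measurable (ξ i))
    (hindep : iIndepFun ξ P)
    (hgeom : ∀ i k, P {ω | ξ i ω = k} = (2 : ENNReal)⁻¹ ^ (k + 1))
    (x y : ℕ) (hx : 0 < x) (hy : 0 < y) :
    P {ω | (y : ℝ) ≤ |∑ i ∈ Finset.range x, ((ξ i ω : ℝ) - 1)|}
      ≤ ENNReal.ofReal (2 * Real.exp (-(y : ℝ)^2 / (6 * max (x : ℝ) (y : ℝ)))) := by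
  set m : ℝ := max (x:ℝ) (y:ℝ) with hm_def
  have hxm : (x:ℝ) ≤ m := le_max_left _ _
  have hym : (y:ℝ) ≤ m := le_max_right _ _
  have hy0 : (0:ℝ) < y := by exact_mod_cast hy
  have hm0 : (0:ℝ) < m := lt_of_lt_of_le hy0 hym
  set t₀ : ℝ := 3/10 * y / m with ht₀_def
  have ht₀pos : 0 < t₀ := by positivity
  have ht₀le : t₀ ≤ 3/10 := by
    rw [ht₀_def, div_le_iff₀ hm0]
    nlinarith
  have hk1 := key1 ht₀pos.le ht₀le
  have hk2 := key2 ht₀pos.le ht₀le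
  have h2e1 : (0:ℝ) < 2 - Real.exp t₀ := lt_of_lt_of_le (Real.exp_pos _) hk1
  have h2e2 : (0:ℝ) < 2 - Real.exp (-t₀) := lt_of_lt_of_le (Real.exp_pos _) hk2
  have hexp1 : Real.exp t₀ < 2 := by linarith
  have hexp2 : Real.exp (-t₀) < 2 := by linarith
  set X : ℕ → Ω → ℝ := fun i ω => (ξ i ω : ℝ) with hX_def
  have hXmeas : ∀ i, Measurable (X i) :=
    fun i => (measurable_from_nat (f := fun k : ℕ => ((k:ℝ)))).comp (hmeas i)
  have hXindep : iIndepFun X P :=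
    hindep.comp (fun _ => (fun k : ℕ => (k:ℝ))) (fun _ => measurable_from_nat)
  -- integrability of exp(t * sum)
  have hintsum : ∀ t : ℝ, Real.exp t < 2 →
      Integrable (fun ω => Real.exp (t * (∑ i ∈ Finset.range x, X i) ω)) P :=
    fun t ht => hXindep.integrable_exp_mul_sum hXmeas
      (fun i _ => int_geom P (ξ i) (hmeas i) (hgeom i) ht)
  have hmgfsum : ∀ t : ℝ, Real.exp t < 2 →
      mgf (∑ i ∈ Finset.range x, X i) P t = ((2 - Real.exp t)⁻¹)^x := by
    intro t ht
    rw [hXindep.mgf_sum hXmeas]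
    rw [Finset.prod_congr rfl (fun i _ => mgf_geom P (ξ i) (hmeas i) (hgeom i) ht),
      Finset.prod_const, Finset.card_range]
  -- Chernoff bounds
  have hA := measure_ge_le_exp_mul_mgf (μ := P) (X := ∑ i ∈ Finset.range x, X i)
    ((x:ℝ) + y) ht₀pos.le (hintsum t₀ hexp1)
  have hB := measure_le_le_exp_mul_mgf (μ := P) (X := ∑ i ∈ Finset.range x, X i)
    ((x:ℝ) - y) (t := -t₀) (neg_nonpos.2 ht₀pos.le) (hintsum (-t₀) hexp2)
  rw [hmgfsum t₀ hexp1] at hA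
  rw [hmgfsum (-t₀) hexp2] at hB
  -- numeric bound
  set E : ℝ := Real.exp (-(y:ℝ)^2 / (6 * m)) with hE_def
  have hnum : ∀ u : ℝ, -t₀ * y + 40/27 * t₀^2 * u ≤ -(y:ℝ)^2 / (6*m) → Real.exp u ≤ 1 → True := fun _ _ _ => trivial
  have hkey_num : -t₀ * y + 40/27 * t₀^2 * x ≤ -(y:ℝ)^2 / (6*m) := by
    have h1 : 40/27 * t₀^2 * x ≤ 40/27 * t₀^2 * m := by nlinarith [sq_nonneg t₀]
    have h2 : -t₀ * y + 40/27 * t₀^2 * m = -(y:ℝ)^2 / (6*m) := by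
      rw [ht₀_def]
      field_simp
      ring
    linarith
  have hinv1 : (2 - Real.exp t₀)⁻¹ ≤ Real.exp (t₀ + 40/27 * t₀^2) := by
    rw [Real.exp_neg] at hk1
    calc (2 - Real.exp t₀)⁻¹ ≤ ((Real.exp (t₀ + 40/27 * t₀^2))⁻¹)⁻¹ :=
          inv_anti₀ (inv_pos.2 (Real.exp_pos _)) hk1
      _ = Real.exp (t₀ + 40/27 * t₀^2) := inv_inv _
  have hinv2 : (2 - Real.exp (-t₀))⁻¹ ≤ Real.exp (-t₀ + 40/27 * t₀^2) := by
    have : Real.exp (t₀ - 40/27 * t₀^2) = (Real.exp (-t₀ + 40/27 * t₀^2))⁻¹ := by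
      rw [← Real.exp_neg]; ring_nf
    rw [this] at hk2
    calc (2 - Real.exp (-t₀))⁻¹ ≤ ((Real.exp (-t₀ + 40/27 * t₀^2))⁻¹)⁻¹ :=
          inv_anti₀ (inv_pos.2 (Real.exp_pos _)) hk2
      _ = _ := inv_inv _
  have hchainA : Real.exp (-t₀ * ((x:ℝ) + y)) * ((2 - Real.exp t₀)⁻¹)^x ≤ E := by
    calc Real.exp (-t₀ * ((x:ℝ) + y)) * ((2 - Real.exp t₀)⁻¹)^x
        ≤ Real.exp (-t₀ * ((x:ℝ) + y)) * (Real.exp (t₀ + 40/27 * t₀^2))^x := by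
          apply mul_le_mul_of_nonneg_left _ (Real.exp_pos _).le
          exact pow_le_pow_left₀ (inv_pos.2 h2e1).le hinv1 x
      _ = Real.exp (-t₀ * ((x:ℝ) + y) + (t₀ + 40/27 * t₀^2) * x) := by
          rw [← Real.exp_nat_mul, ← Real.exp_add, mul_comm (x:ℝ)]
      _ ≤ E := by
          rw [hE_def, Real.exp_le_exp]
          linarith [hkey_num]
  have hchainB : Real.exp (-(-t₀) * ((x:ℝ) - y)) * ((2 - Real.exp (-t₀))⁻¹)^x ≤ E := by
    calc Real.exp (-(-t₀) * ((x:ℝ) - y)) * ((2 - Real.exp (-t₀))⁻¹)^x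
        ≤ Real.exp (-(-t₀) * ((x:ℝ) - y)) * (Real.exp (-t₀ + 40/27 * t₀^2))^x := by
          apply mul_le_mul_of_nonneg_left _ (Real.exp_pos _).le
          exact pow_le_pow_left₀ (inv_pos.2 h2e2).le hinv2 x
      _ = Real.exp (-(-t₀) * ((x:ℝ) - y) + (-t₀ + 40/27 * t₀^2) * x) := by
          rw [← Real.exp_nat_mul, ← Real.exp_add, mul_comm (x:ℝ)]
      _ ≤ E := by
          rw [hE_def, Real.exp_le_exp]
          linarith [hkey_num]
  have hPA : P {ω | (x:ℝ) + y ≤ (∑ i ∈ Finset.range x, X i) ω} ≤ ENNReal.ofReal E := by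
    rw [← ENNReal.ofReal_toReal (measure_ne_top P _)]
    exact ENNReal.ofReal_le_ofReal (le_trans hA hchainA)
  have hPB : P {ω | (∑ i ∈ Finset.range x, X i) ω ≤ (x:ℝ) - y} ≤ ENNReal.ofReal E := by
    rw [← ENNReal.ofReal_toReal (measure_ne_top P _)]
    exact ENNReal.ofReal_le_ofReal (le_trans hB hchainB)
  -- event inclusion
  have hsub : {ω | (y : ℝ) ≤ |∑ i ∈ Finset.range x, ((ξ i ω : ℝ) - 1)|}
      ⊆ {ω | (x:ℝ) + y ≤ (∑ i ∈ Finset.range x, X i) ω}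
        ∪ {ω | (∑ i ∈ Finset.range x, X i) ω ≤ (x:ℝ) - y} := by
    intro ω hω
    simp only [Set.mem_setOf_eq, Set.mem_union] at hω ⊢
    have hsum : ∑ i ∈ Finset.range x, ((ξ i ω:ℝ) - 1)
        = (∑ i ∈ Finset.range x, X i) ω - x := by
      rw [Finset.sum_apply, Finset.sum_sub_distrib, Finset.sum_const, Finset.card_range]
      simp [hX_def]
    rw [hsum] at hω
    rcases le_abs.1 hω with h | h
    · left; linarith
    · right; linarith
  calc P {ω | (y : ℝ) ≤ |∑ i ∈ Finset.range x, ((ξ i ω : ℝ) - 1)|}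
      ≤ P ({ω | (x:ℝ) + y ≤ (∑ i ∈ Finset.range x, X i) ω}
          ∪ {ω | (∑ i ∈ Finset.range x, X i) ω ≤ (x:ℝ) - y}) := measure_mono hsub
    _ ≤ P {ω | (x:ℝ) + y ≤ (∑ i ∈ Finset.range x, X i) ω}
          + P {ω | (∑ i ∈ Finset.range x, X i) ω ≤ (x:ℝ) - y} := measure_union_le _ _
    _ ≤ ENNReal.ofReal E + ENNReal.ofReal E := add_le_add hPA hPB
    _ = ENNReal.ofReal (2 * Real.exp (-(y : ℝ)^2 / (6 * max (x : ℝ) (y : ℝ)))) := by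
        rw [← ENNReal.ofReal_add (Real.exp_pos _).le (Real.exp_pos _).le]
        congr 1
        simp only [hE_def, hm_def, two_mul]
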